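/- Let E be a finite-dimensional real inner product space, A : E → E₁ a surjective linear map onto a finite-dimensional real inner product space E₁, f ∈ E₁, and G : E → ℝ a convex function. Then v̄ ∈ E minimizes G over the affine space {v ∈ E : Av = f} if and only if A v̄ = f and there exists q ∈ E₁ such that A*q is a subgradient of G at v̄ (i.e., ∂G(v̄) ∩ ran(A*) ≠ ∅). -/

import Mathlib

open RealInnerProductSpace

/-- Nonsmooth Lagrange multiplier theorem for convex functions: `v̄` minimizes
the convex function `G` over `{v : Av = f}` (with `A` surjective) if and only if
`A v̄ = f` and some `A*q` is a subgradient of `G` at `v̄`. -/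
theorem statement7 {E E₁ : Type*}
    [NormedAddCommGroup E] [InnerProductSpace ℝ E] [FiniteDimensional ℝ E]
    [NormedAddCommGroup E₁] [InnerProductSpace ℝ E₁] [FiniteDimensional ℝ E₁]
    (A : E →ₗ[ℝ] E₁) (hA : Function.Surjective A) (f : E₁)
    (G : E → ℝ) (hG : ConvexOn ℝ Set.univ G) (vbar : E) :
    (A vbar = f ∧ ∀ v, A v = f → G vbar ≤ G v) ↔
      (A vbar = f ∧ ∃ q : E₁, ∀ w, G vbar + ⟪(LinearMap.adjoint A) q, w - vbar⟫ ≤ G w) := by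
  constructor
  · rintro ⟨hvf, hmin⟩
    refine ⟨hvf, ?_⟩
    -- continuity of G
    have hGc : Continuous G := by
      exact continuousOn_univ.mp (hG.continuousOn isOpen_univ)
    -- right inverse of A
    obtain ⟨B, hB⟩ := A.exists_rightInverse_of_surjective (LinearMap.range_eq_top.2 hA)
    have hAB : ∀ y, A (B y) = y := fun y => congrFun (congrArg DFunLike.coe hB) y
    -- the open convex set
    set D : Set (E₁ × ℝ) := {p | ∃ v, A (v - vbar) = p.1 ∧ G v - G vbar < p.2} with hD
    have hDconv : Convex ℝ D := by
      rintro ⟨y₁, t₁⟩ ⟨v₁, hv₁, ht₁⟩ ⟨y₂, t₂⟩ ⟨v₂, hv₂, ht₂⟩ a b ha hb hab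
      have ht₁' : G v₁ - G vbar < t₁ := ht₁
      have ht₂' : G v₂ - G vbar < t₂ := ht₂
      have hv₁' : A (v₁ - vbar) = y₁ := hv₁
      have hv₂' : A (v₂ - vbar) = y₂ := hv₂
      refine ⟨a • v₁ + b • v₂, ?_, ?_⟩
      · show A (a • v₁ + b • v₂ - vbar) = a • y₁ + b • y₂
        have hcomb : a • v₁ + b • v₂ - vbar = a • (v₁ - vbar) + b • (v₂ - vbar) := by
          have h2 : a • vbar + b • vbar = vbar := by rw [← add_smul, hab, one_smul]
          calc a • v₁ + b • v₂ - vbar = a • v₁ + b • v₂ - (a • vbar + b • vbar) := by rw [h2]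
            _ = a • (v₁ - vbar) + b • (v₂ - vbar) := by rw [smul_sub, smul_sub]; abel
        rw [hcomb, map_add, LinearMap.map_smul, LinearMap.map_smul, hv₁', hv₂']
      · have hGle : G (a • v₁ + b • v₂) ≤ a * G v₁ + b * G v₂ :=
          hG.2 (Set.mem_univ v₁) (Set.mem_univ v₂) ha hb hab
        show G (a • v₁ + b • v₂) - G vbar < a • t₁ + b • t₂
        simp only [smul_eq_mul]
        rcases eq_or_lt_of_le ha with ha0 | ha0
        · have hb1 : b = 1 := by linarith
          rw [← ha0, hb1] at hGle ⊢
          simp only [zero_mul, one_mul, zero_add] at hGle ⊢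
          linarith
        · have hG1 : a * G vbar + b * G vbar = G vbar := by rw [← add_mul, hab, one_mul]
          nlinarith [mul_le_mul_of_nonneg_left ht₂'.le hb, mul_lt_mul_of_pos_left ht₁' ha0]
    have hDopen : IsOpen D := by
      rw [isOpen_iff_mem_nhds]
      rintro ⟨y₀, t₀⟩ ⟨v₀, hv₀, ht₀⟩
      have hcont : Continuous fun p : E₁ × ℝ => p.2 - (G (v₀ + B (p.1 - y₀)) - G vbar) := by
        have hBc : Continuous (B : E₁ → E) := B.continuous_of_finiteDimensional
        fun_prop
      have hmem : (fun p : E₁ × ℝ => p.2 - (G (v₀ + B (p.1 - y₀)) - G vbar)) ⁻¹'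
          Set.Ioi 0 ∈ nhds (y₀, t₀) := by
        refine (hcont.isOpen_preimage _ isOpen_Ioi).mem_nhds ?_
        simp only [Set.mem_preimage, Set.mem_Ioi, sub_self, map_zero, add_zero]
        linarith
      refine Filter.mem_of_superset hmem ?_
      rintro ⟨y, t⟩ hp
      simp only [Set.mem_preimage, Set.mem_Ioi] at hp
      refine ⟨v₀ + B (y - y₀), ?_, by linarith⟩
      have heq : v₀ + B (y - y₀) - vbar = (v₀ - vbar) + B (y - y₀) := by abel
      rw [heq, map_add, hv₀, hAB]
      show y₀ + (y - y₀) = y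
      abel
    -- the ray
    set R : Set (E₁ × ℝ) := {(0 : E₁)} ×ˢ Set.Iic (0 : ℝ) with hR
    have hRconv : Convex ℝ R := (convex_singleton _).prod (convex_Iic 0)
    have hdisj : Disjoint D R := by
      rw [Set.disjoint_left]
      rintro ⟨y, t⟩ ⟨v, hv, ht⟩ ⟨hy, ht0⟩
      simp only [Set.mem_singleton_iff] at hy
      subst hy
      have : A v = f := by
        have := hv
        rw [map_sub, sub_eq_zero] at this
        rw [this, hvf]
      have := hmin v this
      simp only [Set.mem_Iic] at ht0
      linarith
    obtain ⟨φ, c, h1, h2⟩ := geometric_hahn_banach_open hDconv hDopen hRconv hdisj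
    -- basic facts
    have hc0 : c ≤ 0 := by
      have := h2 (0, 0) (by simp [hR])
      simpa [Prod.mk_zero_zero] using this
    have hsplit : ∀ (y : E₁) (t : ℝ), φ (y, t) = φ (y, 0) + t * φ (0, 1) := by
      intro y t
      have : ((y, t) : E₁ × ℝ) = (y, 0) + t • ((0 : E₁), (1 : ℝ)) := by
        simp [Prod.ext_iff]
      rw [this, map_add, map_smul, smul_eq_mul]
    set r : ℝ := φ (0, 1) with hrdef
    have key : ∀ (v : E) (t : ℝ), G v - G vbar < t → φ (A (v - vbar), 0) + t * r < c := by
      intro v t ht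
      have := h1 (A (v - vbar), t) ⟨v, rfl, ht⟩
      rwa [hsplit] at this
    have hr : r < 0 := by
      have := key vbar 1 (by simp)
      simp only [sub_self, map_zero, one_mul] at this
      have h00 : φ ((0 : E₁), (0 : ℝ)) = 0 := by
        have : ((0 : E₁), (0 : ℝ)) = (0 : E₁ × ℝ) := rfl
        rw [this, map_zero]
      rw [h00, zero_add] at this
      linarith
    have hineq : ∀ v : E, φ (A (v - vbar), 0) + (G v - G vbar) * r ≤ c := by
      intro v
      by_contra hcon
      push_neg at hcon
      set δ := φ (A (v - vbar), 0) + (G v - G vbar) * r - c with hδ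
      have hδ0 : 0 < δ := by linarith
      have hε : 0 < δ / (-r) := div_pos hδ0 (neg_pos.2 hr)
      have hk := key v (G v - G vbar + δ / (-r)) (by linarith)
      have hrne : r ≠ 0 := hr.ne
      have h3 : δ / (-r) * r = -δ := by
        field_simp
      have hdr : (G v - G vbar + δ / (-r)) * r = (G v - G vbar) * r - δ := by
        rw [add_mul, h3]
        ring
      rw [hdr] at hk
      linarith
    -- Riesz representation
    set M : E₁ →L[ℝ] ℝ := φ.comp (ContinuousLinearMap.inl ℝ E₁ ℝ) with hM
    set q : E₁ := (-r)⁻¹ • (InnerProductSpace.toDual ℝ E₁).symm M with hq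
    refine ⟨q, fun w => ?_⟩
    have hinner : ⟪(LinearMap.adjoint A) q, w - vbar⟫ = (-r)⁻¹ * φ (A (w - vbar), 0) := by
      rw [LinearMap.adjoint_inner_left, hq, inner_smul_left]
      simp only [RCLike.conj_to_real]
      congr 1
      have := InnerProductSpace.toDual_symm_apply (𝕜 := ℝ) (E := E₁) (x := A (w - vbar)) (y := M)
      rw [this, hM]
      rfl
    rw [hinner]
    have h := hineq w
    have hrpos : 0 < -r := neg_pos.2 hr
    have : φ (A (w - vbar), 0) ≤ (G w - G vbar) * (-r) := by nlinarith
    have hdiv : (-r)⁻¹ * φ (A (w - vbar), 0) ≤ G w - G vbar := by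
      rw [inv_mul_le_iff₀ hrpos, mul_comm]
      exact this
    linarith
  · rintro ⟨hvf, q, hq⟩
    refine ⟨hvf, fun v hv => ?_⟩
    have h := hq v
    have h0 : A (v - vbar) = 0 := by rw [map_sub, hv, hvf, sub_self]
    rw [LinearMap.adjoint_inner_left, h0, inner_zero_right, add_zero] at h
    exact h
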